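/- Define, for real parameters satisfying the stated constraints, the Kerr–Newman–AdS thermodynamic quantities (with l > 0, 0 ≤ |a| < l, q ∈ ℝ, r₊ > 0, Ξ = 1 − a²/l², and m determined by the horizon condition (r₊² + a²)(1 + r₊²/l²) − 2 m r₊ + q² = 0): M = 8πm/(κ²Ξ²), J = 8πma/(κ²Ξ²), Q = 4πq/(κ²Ξ), S = (2π/κ²)·4π(r₊²+a²)/Ξ, T = β⁻¹ with β = 4π(r₊²+a²)/[ r₊(1 + a²/l² + 3r₊²/l² − (a²+q²)/r₊²) ], Ω = a(1 + r₊²/l²)/(r₊²+a²), Φ = 2qr₊/(r₊²+a²), and the on-shell action I = (4πβ/(κ²l²Ξ))·[ m l² − r₊(r₊²+a²) − q²l²r₊/(r₊²+a²) ]. Then the quantum statistical relation I = β( M − T S − Ω J − Φ Q ) holds identically. -/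

import Mathlib

set_option maxHeartbeats 1000000


/-- Quantum statistical relation `I = β(M − TS − ΩJ − ΦQ)` for the
four-dimensional Kerr–Newman–AdS black hole, as a purely algebraic identity in the
real parameters `l, a, q, r₊, κ`, with `m` determined by the horizon condition
`Δ_r(r₊) = 0`, i.e. `(r₊²+a²)(1+r₊²/l²) − 2mr₊ + q² = 0`. -/
theorem stmt_9 (l a q rp κ m : ℝ)
    (hl : 0 < l) (ha : |a| < l) (hrp : 0 < rp) (hκ : κ ≠ 0)
    (hm : (rp^2 + a^2) * (1 + rp^2/l^2) - 2*m*rp + q^2 = 0)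
    (hΞ : 1 - a^2/l^2 ≠ 0)
    (hβden : rp * (1 + a^2/l^2 + 3*rp^2/l^2 - (a^2+q^2)/rp^2) ≠ 0) :
    let Ξ : ℝ := 1 - a^2/l^2
    let β : ℝ := 4*Real.pi*(rp^2+a^2) / (rp * (1 + a^2/l^2 + 3*rp^2/l^2 - (a^2+q^2)/rp^2))
    let M : ℝ := 8*Real.pi*m/(κ^2*Ξ^2)
    let J : ℝ := 8*Real.pi*m*a/(κ^2*Ξ^2)
    let Q : ℝ := 4*Real.pi*q/(κ^2*Ξ)
    let S : ℝ := (2*Real.pi/κ^2) * (4*Real.pi*(rp^2+a^2)/Ξ)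
    let T : ℝ := 1/β
    let Ω : ℝ := a*(1+rp^2/l^2)/(rp^2+a^2)
    let Φ : ℝ := 2*q*rp/(rp^2+a^2)
    let I : ℝ := (4*Real.pi*β/(κ^2*l^2*Ξ)) * (m*l^2 - rp*(rp^2+a^2) - q^2*l^2*rp/(rp^2+a^2))
    I = β * (M - T*S - Ω*J - Φ*Q) := by
  intro Ξ β M J Q S T Ω Φ I
  have hl0 : l ≠ 0 := ne_of_gt hl
  have hrp0 : rp ≠ 0 := ne_of_gt hrp
  have hra : rp^2 + a^2 ≠ 0 := by positivity
  have hπ : Real.pi ≠ 0 := Real.pi_ne_zero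
  have hN : 4*Real.pi*(rp^2+a^2) ≠ 0 := by positivity
  have hΞ2 : l^2 - a^2 ≠ 0 := by
    intro h
    apply hΞ
    have h2 : l^2 ≠ 0 := pow_ne_zero 2 hl0
    field_simp
    linarith
  have hΞ3 : a^2 - l^2 ≠ 0 := fun h => hΞ2 (by linarith)
  have hm' : m = ((rp^2 + a^2) * (1 + rp^2/l^2) + q^2) / (2*rp) := by
    field_simp at hm ⊢
    linarith
  subst hm'
  have hTS : T*S = 2*Real.pi/κ^2 *
      (rp * (1 + a^2/l^2 + 3*rp^2/l^2 - (a^2+q^2)/rp^2)) / Ξ := by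
    simp only [T, S, β, Ξ]
    rw [one_div_div]
    field_simp
  rw [hTS]
  have hI : I = β * ((4*Real.pi/(κ^2*l^2*Ξ)) *
      (((rp^2 + a^2) * (1 + rp^2/l^2) + q^2) / (2*rp)*l^2 - rp*(rp^2+a^2)
        - q^2*l^2*rp/(rp^2+a^2))) := by
    simp only [I]; ring
  rw [hI]
  congr 1
  simp only [M, J, Q, Ω, Φ, Ξ]
  field_simp
  ring
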